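/- Ford–Fulkerson duality: for a finite network G=(V,E,c) with conductances c and the dual-weighted network H=(V,E,r) with r(e)=1/c(e), and disjoint nonempty vertex sets S,T, the product λ(S↔T;G)·λ(S↮T;H) = 1, where λ(S↮T;H) is the extremal length of the family of S–T edge cuts in H. -/

import Mathlib

open Finset

section Helpers

lemma lip_min (a b k : ℝ) : |min a k - min b k| ≤ |a - b| := by
  rcases le_total a k with h | h <;> rcases le_total b k with h' | h' <;>
    simp [min_eq_left, min_eq_right, h, h'] <;> rw [abs_le] <;>
    constructor <;> cases abs_cases (a - b) <;> linarith

lemma lip_clamp (a b : ℝ) : |max 0 (min 1 a) - max 0 (min 1 b)| ≤ |a - b| := by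
  calc |max 0 (min 1 a) - max 0 (min 1 b)| ≤ |min 1 a - min 1 b| := by
        rcases le_total (0:ℝ) (min 1 a) with h | h <;> rcases le_total (0:ℝ) (min 1 b) with h' | h' <;>
          simp [max_eq_left, max_eq_right, h, h'] <;> rw [abs_le] <;>
          constructor <;> cases abs_cases (min 1 a - min 1 b) <;> linarith
    _ ≤ |a - b| := by rw [min_comm 1 a, min_comm 1 b]; exact lip_min a b 1

lemma antisym_sum_zero {V : Type*} (s : Finset V) (f : V → V → ℝ)
    (hf : ∀ x y, f x y = - f y x) : ∑ x ∈ s, ∑ y ∈ s, f x y = 0 := by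
  have h : (∑ x ∈ s, ∑ y ∈ s, f x y) = - ∑ x ∈ s, ∑ y ∈ s, f x y := by
    nth_rewrite 1 [Finset.sum_comm]
    rw [← Finset.sum_neg_distrib]
    exact Finset.sum_congr rfl fun x _ => by
      rw [← Finset.sum_neg_distrib]
      exact Finset.sum_congr rfl fun y _ => by rw [hf y x]
  linarith

lemma quad_zero (A B : ℝ) (hA : 0 ≤ A) (h : ∀ ε : ℝ, 0 ≤ ε * B + ε ^ 2 * A) : B = 0 := by
  have h2 : (0:ℝ) < 2 * A + 1 := by linarith
  have h1 := h (-B / (2 * A + 1))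
  have h1' : 0 ≤ (-B * B * (2 * A + 1) + B ^ 2 * A) / (2 * A + 1) ^ 2 := by
    rw [div_mul_eq_mul_div, div_pow, div_mul_eq_mul_div] at h1
    calc (0:ℝ) ≤ -B * B / (2 * A + 1) + (-B) ^ 2 * A / (2 * A + 1) ^ 2 := h1
      _ = (-B * B * (2 * A + 1) + B ^ 2 * A) / (2 * A + 1) ^ 2 := by field_simp
  rw [le_div_iff₀ (by positivity)] at h1'
  nlinarith [sq_nonneg B]

section PathHelpers
variable {V : Type*} {c : V → V → ℝ}

-- H2a: snoc basic evals
lemma snoc_zero {m : ℕ} (γ : Fin (m+1) → V) (y : V) :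
    (Fin.snoc γ y : Fin (m+2) → V) 0 = γ 0 := by
  have : ((0 : Fin (m+2))) = (0 : Fin (m+1)).castSucc := rfl
  rw [this, Fin.snoc_castSucc]

-- H2b: snoc preserves positive edges
lemma snoc_prop {P : V → V → Prop} {m : ℕ} {γ : Fin (m+1) → V} {y : V}
    (hpos : ∀ i : Fin m, P (γ i.castSucc) (γ i.succ))
    (hy : P (γ (Fin.last m)) y) :
    ∀ i : Fin (m+1), P ((Fin.snoc γ y : Fin (m+2) → V) i.castSucc)
      ((Fin.snoc γ y : Fin (m+2) → V) i.succ) := by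
  intro i
  induction i using Fin.lastCases with
  | last =>
      rw [Fin.succ_last, Fin.snoc_last, Fin.snoc_castSucc]
      exact hy
  | cast j =>
      rw [Fin.succ_castSucc, Fin.snoc_castSucc, Fin.snoc_castSucc]
      exact hpos j

-- H2c: sum along snoc
lemma snoc_sum {m : ℕ} (ρ : V → V → ℝ) (γ : Fin (m+1) → V) (y : V) :
    ∑ i : Fin (m+1), ρ ((Fin.snoc γ y : Fin (m+2) → V) i.castSucc)
        ((Fin.snoc γ y : Fin (m+2) → V) i.succ)
      = (∑ i : Fin m, ρ (γ i.castSucc) (γ i.succ)) + ρ (γ (Fin.last m)) y := by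
  rw [Fin.sum_univ_castSucc]
  congr 1
  · exact Finset.sum_congr rfl fun j _ => by
      rw [Fin.succ_castSucc, Fin.snoc_castSucc, Fin.snoc_castSucc]
  · rw [Fin.succ_last, Fin.snoc_last, Fin.snoc_castSucc]

-- H3: existence of Fin-paths from ReflTransGen
lemma exists_finpath {s x : V} (h : Relation.ReflTransGen (fun u v => 0 < c u v) s x) :
    ∃ (m : ℕ) (γ : Fin (m+1) → V), γ 0 = s ∧ γ (Fin.last m) = x ∧
      ∀ i : Fin m, 0 < c (γ i.castSucc) (γ i.succ) := by
  induction h with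
  | refl => exact ⟨0, fun _ => s, rfl, rfl, fun i => i.elim0⟩
  | @tail b y _ hbc ih =>
      obtain ⟨m, γ, h0, hl, hp⟩ := ih
      refine ⟨m+1, Fin.snoc γ y, ?_, ?_, ?_⟩
      · rw [snoc_zero]; exact h0
      · rw [Fin.snoc_last]
      · exact snoc_prop (P := fun a b => 0 < c a b) hp (by rw [hl]; exact hbc)

-- H4: telescoping sum along a Fin path
lemma telescope {m : ℕ} (γ : Fin (m+1) → V) (u : V → ℝ) :
    ∑ i : Fin m, (u (γ i.succ) - u (γ i.castSucc)) = u (γ (Fin.last m)) - u (γ 0) := by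
  set f : ℕ → ℝ := fun n => u (γ ⟨min n m, by omega⟩) with hf
  have key : ∀ i : Fin m, u (γ i.succ) - u (γ i.castSucc) = f (i.1 + 1) - f i.1 := by
    intro i
    have h1 : min (i.1 + 1) m = i.1 + 1 := by omega
    have h2 : min i.1 m = i.1 := by omega
    simp only [hf, h1, h2]
    congr 2 <;> exact (Fin.ext (by simp)).symm
  rw [Finset.sum_congr rfl (fun i _ => key i)]
  rw [Fin.sum_univ_eq_sum_range (fun n => f (n+1) - f n) m, Finset.sum_range_sub f m]
  have hm : min m m = m := by omega
  have h0 : min 0 m = 0 := by omega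
  simp only [hf, hm, h0]
  congr 2 <;> exact (Fin.ext (by simp)).symm

-- H9: crossing index
end PathHelpers

lemma exists_crossing {m : ℕ} (Q : Fin (m+1) → Prop) [DecidablePred Q]
    (h0 : Q 0) (hl : ¬ Q (Fin.last m)) : ∃ i : Fin m, Q i.castSucc ∧ ¬ Q i.succ := by
  classical
  set s : Finset (Fin (m+1)) := Finset.univ.filter Q with hs
  have hne : s.Nonempty := ⟨0, by simp [hs, h0]⟩
  set j := s.max' hne with hj
  have hjQ : Q j := by have := s.max'_mem hne; simpa [hs] using this
  have hjm : j.1 < m := by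
    rcases lt_or_eq_of_le (Nat.lt_succ_iff.1 j.2) with h | h
    · exact h
    · exact absurd hjQ (by rwa [show j = Fin.last m from Fin.ext h])
  refine ⟨⟨j.1, hjm⟩, ?_, ?_⟩
  · have : (⟨j.1, hjm⟩ : Fin m).castSucc = j := Fin.ext rfl
    rw [this]; exact hjQ
  · intro hQ
    have hmem : (⟨j.1, hjm⟩ : Fin m).succ ∈ s := by
      rw [hs, Finset.mem_filter]; exact ⟨Finset.mem_univ _, hQ⟩
    have := s.le_max' _ hmem
    rw [← hj] at this
    exact absurd this (by simp [Fin.lt_iff_val_lt_val, Fin.le_iff_val_le_val])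


lemma snoc_zero' {V : Type*} {m : ℕ} (γ : Fin (m+1) → V) (y : V) :
    (Fin.snoc γ y : Fin (m+2) → V) 0 = γ 0 := snoc_zero γ y

lemma telescope' {V : Type*} {m : ℕ} (γ : Fin (m+1) → V) (u : V → ℝ) :
    ∑ i : Fin m, (u (γ i.succ) - u (γ i.castSucc)) = u (γ (Fin.last m)) - u (γ 0) :=
  telescope γ u

-- H5: grid identity
lemma grid_sum {K : ℕ} (t : Fin (K+1) → ℝ) (hmono : StrictMono t) {a b : ℝ}
    (ha : ∃ j, t j = a) (hb : ∃ j, t j = b) (hab : a ≤ b) :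
    ∑ j : Fin K, (if a ≤ t j.castSucc ∧ t j.castSucc < b then t j.succ - t j.castSucc else 0)
      = b - a := by
  obtain ⟨ja, hja⟩ := ha
  obtain ⟨jb, hjb⟩ := hb
  set cl : ℝ → ℝ := fun z => min b (max a z) with hcl
  have key : ∀ j : Fin K,
      (if a ≤ t j.castSucc ∧ t j.castSucc < b then t j.succ - t j.castSucc else 0)
        = cl (t j.succ) - cl (t j.castSucc) := by
    intro j
    have hlt : t j.castSucc < t j.succ := hmono (Fin.castSucc_lt_succ : j.castSucc < j.succ)
    by_cases h1 : a ≤ t j.castSucc ∧ t j.castSucc < b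
    · have hsb : t j.succ ≤ b := by
        rw [← hjb]; apply hmono.monotone
        rw [← Fin.castSucc_lt_iff_succ_le, ← hmono.lt_iff_lt, hjb]; exact h1.2
      have e1 : cl (t j.castSucc) = t j.castSucc := by
        rw [hcl]; simp only [max_eq_right h1.1]; exact min_eq_right h1.2.le
      have e2 : cl (t j.succ) = t j.succ := by
        rw [hcl]; simp only [max_eq_right (le_trans h1.1 hlt.le)]; exact min_eq_right hsb
      rw [if_pos h1, e1, e2]
    · rw [if_neg h1]
      push_neg at h1
      rcases lt_or_ge (t j.castSucc) a with h2 | h2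
      · have hsa : t j.succ ≤ a := by
          rw [← hja]; apply hmono.monotone
          rw [← Fin.castSucc_lt_iff_succ_le, ← hmono.lt_iff_lt, hja]; exact h2
        have e1 : cl (t j.castSucc) = a := by
          rw [hcl]; simp only [max_eq_left h2.le]; exact min_eq_right hab
        have e2 : cl (t j.succ) = a := by
          rw [hcl]; simp only [max_eq_left hsa]; exact min_eq_right hab
        rw [e1, e2, sub_self]
      · have h3 : b ≤ t j.castSucc := h1 h2
        have e1 : cl (t j.castSucc) = b := by
          rw [hcl]; simp only [max_eq_right (le_trans hab h3)]; exact min_eq_left h3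
        have e2 : cl (t j.succ) = b := by
          rw [hcl]; simp only [max_eq_right (le_trans (le_trans hab h3) hlt.le)]
          exact min_eq_left (le_trans h3 hlt.le)
        rw [e1, e2, sub_self]
  rw [Finset.sum_congr rfl fun j _ => key j, telescope' t cl]
  have hta : t 0 ≤ a := by rw [← hja]; exact hmono.monotone (Fin.zero_le ja)
  have htb : b ≤ t (Fin.last K) := by rw [← hjb]; exact hmono.monotone (Fin.le_last jb)
  have e0 : cl (t 0) = a := by
    rw [hcl]; simp only [max_eq_left hta]; exact min_eq_right hab
  have el : cl (t (Fin.last K)) = b := by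
    rw [hcl]; simp only [max_eq_right (le_trans hab htb)]; exact min_eq_left htb
  rw [e0, el]

section Main
variable {V : Type*} [Fintype V] [DecidableEq V]

noncomputable def Eh (c : V → V → ℝ) (u : V → ℝ) : ℝ :=
  (1/2) * ∑ x, ∑ y, c x y * (u y - u x)^2

lemma Eh_cont (c : V → V → ℝ) : Continuous (Eh c) := by
  unfold Eh
  apply Continuous.mul continuous_const
  apply continuous_finset_sum
  intro x _
  apply continuous_finset_sum
  intro y _
  exact Continuous.mul continuous_const (((continuous_apply y).sub (continuous_apply x)).pow 2)

lemma exists_min (c : V → V → ℝ) (hnn : ∀ x y, 0 ≤ c x y) (S T : Finset V)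
    (hdisj : Disjoint S T) :
    ∃ u : V → ℝ, (∀ x, u x ∈ Set.Icc (0:ℝ) 1) ∧ (∀ s ∈ S, u s = 0) ∧ (∀ t ∈ T, u t = 1) ∧
      ∀ w : V → ℝ, (∀ s ∈ S, w s = 0) → (∀ t ∈ T, w t = 1) → Eh c u ≤ Eh c w := by
  classical
  set K : Set (V → ℝ) := {u | (∀ x, u x ∈ Set.Icc (0:ℝ) 1) ∧ (∀ s ∈ S, u s = 0) ∧
    ∀ t ∈ T, u t = 1} with hK
  have hKne : K.Nonempty := by
    refine ⟨fun x => if x ∈ T then 1 else 0, fun x => ?_, fun s hs => ?_, fun t ht => ?_⟩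
    · by_cases h : x ∈ T <;> simp [h]
    · have : s ∉ T := Finset.disjoint_left.1 hdisj hs
      simp [this]
    · simp [ht]
  have hKc : IsCompact K := by
    have hsub : K ⊆ Set.pi Set.univ (fun _ : V => Set.Icc (0:ℝ) 1) := by
      intro u hu x _; exact hu.1 x
    have hclosed : IsClosed K := by
      have h1 : IsClosed {u : V → ℝ | ∀ x, u x ∈ Set.Icc (0:ℝ) 1} := by
        have : {u : V → ℝ | ∀ x, u x ∈ Set.Icc (0:ℝ) 1}
            = Set.pi Set.univ (fun _ : V => Set.Icc (0:ℝ) 1) := by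
          ext u; simp only [Set.mem_setOf_eq, Set.mem_pi, Set.mem_univ, forall_true_left]
        rw [this]
        exact isClosed_set_pi (fun i _ => isClosed_Icc)
      have h2 : IsClosed {u : V → ℝ | ∀ s ∈ S, u s = 0} := by
        have : {u : V → ℝ | ∀ s ∈ S, u s = 0} = ⋂ s ∈ S, {u : V → ℝ | u s = 0} := by
          ext u; simp
        rw [this]
        exact isClosed_biInter fun s _ => isClosed_eq (continuous_apply s) continuous_const
      have h3 : IsClosed {u : V → ℝ | ∀ t ∈ T, u t = 1} := by
        have : {u : V → ℝ | ∀ t ∈ T, u t = 1} = ⋂ t ∈ T, {u : V → ℝ | u t = 1} := by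
          ext u; simp
        rw [this]
        exact isClosed_biInter fun t _ => isClosed_eq (continuous_apply t) continuous_const
      have : K = {u : V → ℝ | ∀ x, u x ∈ Set.Icc (0:ℝ) 1} ∩
          ({u : V → ℝ | ∀ s ∈ S, u s = 0} ∩ {u : V → ℝ | ∀ t ∈ T, u t = 1}) := by
        ext u
        simp only [hK, Set.mem_setOf_eq, Set.mem_inter_iff]
      rw [this]
      exact h1.inter (h2.inter h3)
    exact (isCompact_univ_pi fun _ => isCompact_Icc).of_isClosed_subset hclosed hsub
  obtain ⟨u, huK, humin⟩ := hKc.exists_isMinOn hKne (Eh_cont c).continuousOn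
  refine ⟨u, huK.1, huK.2.1, huK.2.2, fun w hwS hwT => ?_⟩
  set w' : V → ℝ := fun x => max 0 (min 1 (w x)) with hw'
  have hw'K : w' ∈ K := by
    refine ⟨fun x => ?_, fun s hs => ?_, fun t ht => ?_⟩
    · constructor
      · exact le_max_left _ _
      · exact max_le (by norm_num) (min_le_left _ _)
    · simp [hw', hwS s hs]
    · simp [hw', hwT t ht]
  have hle : Eh c w' ≤ Eh c w := by
    unfold Eh
    apply mul_le_mul_of_nonneg_left _ (by norm_num)
    apply Finset.sum_le_sum; intro x _
    apply Finset.sum_le_sum; intro y _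
    apply mul_le_mul_of_nonneg_left _ (hnn x y)
    have := lip_clamp (w y) (w x)
    calc (w' y - w' x)^2 = |w' y - w' x|^2 := (sq_abs _).symm
      _ ≤ |w y - w x|^2 := by
          apply pow_le_pow_left₀ (abs_nonneg _) _ 2
          exact this
      _ = (w y - w x)^2 := sq_abs _
  exact le_trans (humin hw'K) hle


lemma harmonic_min (c : V → V → ℝ) (hsym : ∀ x y, c x y = c y x) (hnn : ∀ x y, 0 ≤ c x y)
    (S T : Finset V) (u : V → ℝ)
    (huS : ∀ s ∈ S, u s = 0) (huT : ∀ t ∈ T, u t = 1)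
    (hmin : ∀ w : V → ℝ, (∀ s ∈ S, w s = 0) → (∀ t ∈ T, w t = 1) → Eh c u ≤ Eh c w)
    (x : V) (hxS : x ∉ S) (hxT : x ∉ T) :
    ∑ y, c x y * (u y - u x) = 0 := by
  classical
  set Ax : ℝ := ∑ b ∈ univ.erase x, c x b with hAx
  set Bx : ℝ := ∑ b ∈ univ.erase x, 2 * (c x b * (u x - u b)) with hBx
  have hAnn : 0 ≤ Ax := Finset.sum_nonneg fun b _ => hnn x b
  have key : ∀ ε : ℝ, Eh c (Function.update u x (u x + ε)) = Eh c u + (ε * Bx + ε^2 * Ax) := by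
    intro ε
    set w : V → ℝ := Function.update u x (u x + ε) with hw
    have hwx : w x = u x + ε := Function.update_self x _ u
    have hwo : ∀ z, z ≠ x → w z = u z := fun z hz => Function.update_of_ne hz _ u
    set g : V → V → ℝ := fun a b => c a b * ((w b - w a)^2 - (u b - u a)^2) with hg
    have hsplit : ∑ a, ∑ b, g a b = (∑ b, g x b) + ∑ a ∈ univ.erase x, g a x := by
      rw [← Finset.add_sum_erase _ _ (mem_univ x)]
      congr 1
      apply Finset.sum_congr rfl
      intro a ha
      have hax : a ≠ x := Finset.ne_of_mem_erase ha
      apply Finset.sum_eq_single_of_mem x (mem_univ x)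
      intro b _ hbx
      rw [hg]
      simp only [hwo b hbx, hwo a hax]
      ring
    have hxrow : (∑ b, g x b) = ε^2 * Ax + ε * Bx := by
      rw [← Finset.add_sum_erase _ _ (mem_univ x)]
      have hgxx : g x x = 0 := by rw [hg]; ring_nf
      rw [hgxx, zero_add, hAx, hBx, Finset.mul_sum, Finset.mul_sum, ← Finset.sum_add_distrib]
      apply Finset.sum_congr rfl
      intro b hb
      have hbx : b ≠ x := Finset.ne_of_mem_erase hb
      rw [hg]
      simp only [hwo b hbx, hwx]
      ring
    have hxcol : (∑ a ∈ univ.erase x, g a x) = ε^2 * Ax + ε * Bx := by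
      rw [hAx, hBx, Finset.mul_sum, Finset.mul_sum, ← Finset.sum_add_distrib]
      apply Finset.sum_congr rfl
      intro a ha
      have hax : a ≠ x := Finset.ne_of_mem_erase ha
      rw [hg]
      simp only [hwo a hax, hwx, hsym x a]
      ring
    have hdiff : ∑ a, ∑ b, c a b * (w b - w a)^2
        = (∑ a, ∑ b, c a b * (u b - u a)^2) + ∑ a, ∑ b, g a b := by
      rw [← Finset.sum_add_distrib]
      apply Finset.sum_congr rfl; intro a _
      rw [← Finset.sum_add_distrib]
      apply Finset.sum_congr rfl; intro b _
      rw [hg]; ring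
    unfold Eh
    rw [hdiff, hsplit, hxrow, hxcol]
    ring
  have hzero : Bx = 0 := by
    apply quad_zero Ax Bx hAnn
    intro ε
    have hb1 : ∀ s ∈ S, Function.update u x (u x + ε) s = 0 := by
      intro s hs
      rw [Function.update_of_ne (by rintro rfl; exact hxS hs) _ u]
      exact huS s hs
    have hb2 : ∀ t ∈ T, Function.update u x (u x + ε) t = 1 := by
      intro t ht
      rw [Function.update_of_ne (by rintro rfl; exact hxT ht) _ u]
      exact huT t ht
    have := hmin _ hb1 hb2
    rw [key ε] at this
    linarith
  have : ∑ y, c x y * (u y - u x) = ∑ y ∈ univ.erase x, c x y * (u y - u x) := by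
    rw [← Finset.add_sum_erase _ _ (mem_univ x)]
    simp
  rw [this]
  have : ∑ y ∈ univ.erase x, c x y * (u y - u x) = -(1/2) * Bx := by
    rw [hBx, Finset.mul_sum]
    apply Finset.sum_congr rfl
    intro b _; ring
  rw [this, hzero]
  ring

lemma flow_strength (c : V → V → ℝ) (hsym : ∀ x y, c x y = c y x)
    (S T : Finset V) (hdisj : Disjoint S T) (u : V → ℝ)
    (huS : ∀ s ∈ S, u s = 0) (huT : ∀ t ∈ T, u t = 1)
    (hharm : ∀ x, x ∉ S → x ∉ T → ∑ y, c x y * (u y - u x) = 0) :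
    ∑ x ∈ S, ∑ y, c x y * (u y - u x) = Eh c u := by
  classical
  set div : V → ℝ := fun a => ∑ b, c a b * (u b - u a) with hdiv
  set X : ℝ := ∑ a, ∑ b, c a b * (u b - u a) * u a with hX
  have hY : ∑ a, ∑ b, c a b * (u b - u a) * u b = -X := by
    rw [Finset.sum_comm, hX, ← Finset.sum_neg_distrib]
    apply Finset.sum_congr rfl; intro a _
    rw [← Finset.sum_neg_distrib]
    apply Finset.sum_congr rfl; intro b _
    rw [hsym a b]; ring
  have h2E : (∑ a, ∑ b, c a b * (u b - u a) * u b) - X = 2 * Eh c u := by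
    rw [hX, ← Finset.sum_sub_distrib]
    unfold Eh
    rw [show (2:ℝ) * ((1/2) * ∑ x, ∑ y, c x y * (u y - u x)^2)
      = ∑ x, ∑ y, c x y * (u y - u x)^2 by ring]
    apply Finset.sum_congr rfl; intro a _
    rw [← Finset.sum_sub_distrib]
    apply Finset.sum_congr rfl; intro b _
    ring
  have hXE : X = - Eh c u := by rw [hY] at h2E; linarith
  have hsum0 : ∑ a, div a = 0 := by
    rw [hdiv]
    apply antisym_sum_zero
    intro a b; rw [hsym a b]; ring
  have hXdiv : X = ∑ a, u a * div a := by
    rw [hX, hdiv]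
    apply Finset.sum_congr rfl; intro a _
    rw [Finset.mul_sum]
    apply Finset.sum_congr rfl; intro b _
    ring
  have hXT : X = ∑ a ∈ T, div a := by
    rw [hXdiv]
    have : ∀ a, u a * div a = if a ∈ T then div a else 0 := by
      intro a
      by_cases haT : a ∈ T
      · rw [if_pos haT, huT a haT, one_mul]
      · rw [if_neg haT]
        by_cases haS : a ∈ S
        · rw [huS a haS, zero_mul]
        · have : div a = 0 := hharm a haS haT
          rw [this, mul_zero]
    rw [Finset.sum_congr rfl fun a _ => this a, Finset.sum_ite_mem, Finset.univ_inter]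
  have hsplit : ∑ a, div a = (∑ a ∈ S, div a) + ∑ a ∈ T, div a := by
    have : ∀ a, div a = (if a ∈ S then div a else 0) + (if a ∈ T then div a else 0) := by
      intro a
      by_cases haS : a ∈ S
      · have haT : a ∉ T := Finset.disjoint_left.1 hdisj haS
        rw [if_pos haS, if_neg haT, add_zero]
      · rw [if_neg haS]
        by_cases haT : a ∈ T
        · rw [if_pos haT, zero_add]
        · have : div a = 0 := hharm a haS haT
          rw [if_neg haT, this, add_zero]
    rw [Finset.sum_congr rfl fun a _ => this a, Finset.sum_add_distrib,
      Finset.sum_ite_mem, Finset.sum_ite_mem, Finset.univ_inter, Finset.univ_inter]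
  have : ∑ a ∈ S, div a = Eh c u := by
    have h1 : (∑ a ∈ S, div a) + ∑ a ∈ T, div a = 0 := by rw [← hsplit]; exact hsum0
    have h2 : ∑ a ∈ T, div a = - Eh c u := by rw [← hXT]; exact hXE
    linarith
  rw [← this]

lemma cut_lower (c : V → V → ℝ) (hsym : ∀ x y, c x y = c y x) (hnn : ∀ x y, 0 ≤ c x y)
    (S T : Finset V) (hdisj : Disjoint S T) (u : V → ℝ)
    (huS : ∀ s ∈ S, u s = 0) (huT : ∀ t ∈ T, u t = 1)
    (hharm : ∀ x, x ∉ S → x ∉ T → ∑ y, c x y * (u y - u x) = 0)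
    (F : Finset (V × V))
    (hFsym : ∀ x y : V, (x, y) ∈ F → (y, x) ∈ F)
    (hFcut : ∀ (m : ℕ) (γ : Fin (m+1) → V), γ 0 ∈ S → γ (Fin.last m) ∈ T →
      (∀ i : Fin m, 0 < c (γ i.castSucc) (γ i.succ)) →
      ∃ i : Fin m, (γ i.castSucc, γ i.succ) ∈ F) :
    Eh c u ≤ (1/2) * ∑ p ∈ F, c p.1 p.2 * |u p.2 - u p.1| := by
  classical
  set A : Set V := {x | ∃ (m : ℕ) (γ : Fin (m+1) → V), γ 0 ∈ S ∧ γ (Fin.last m) = x ∧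
    (∀ i : Fin m, 0 < c (γ i.castSucc) (γ i.succ)) ∧
    (∀ i : Fin m, (γ i.castSucc, γ i.succ) ∉ F)} with hA
  set Af : Finset V := univ.filter (fun x => x ∈ A) with hAf
  have hSA : ∀ s ∈ S, s ∈ Af := by
    intro s hs
    rw [hAf, Finset.mem_filter]
    exact ⟨mem_univ s, ⟨0, fun _ => s, hs, rfl, fun i => i.elim0, fun i => i.elim0⟩⟩
  have hTA : ∀ t ∈ T, t ∉ Af := by
    intro t ht hmem
    rw [hAf, Finset.mem_filter] at hmem
    obtain ⟨m, γ, h0, hl, hp, hav⟩ := hmem.2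
    obtain ⟨i, hi⟩ := hFcut m γ h0 (hl ▸ ht) hp
    exact hav i hi
  have hclosed : ∀ x y, x ∈ Af → 0 < c x y → (x, y) ∉ F → y ∈ Af := by
    intro x y hx hc hxy
    rw [hAf, Finset.mem_filter] at hx ⊢
    obtain ⟨m, γ, h0, hl, hp, hav⟩ := hx.2
    refine ⟨mem_univ y, m+1, Fin.snoc γ y, ?_, Fin.snoc_last _ _, ?_, ?_⟩
    · rw [snoc_zero']; exact h0
    · exact snoc_prop (P := fun a b => 0 < c a b) hp (by rw [hl]; exact hc)
    · exact snoc_prop (P := fun a b => (a,b) ∉ F) hav (by rw [hl]; exact hxy)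
  set f : V → V → ℝ := fun x y => c x y * (u y - u x) with hf
  set σ : V → V → ℝ := fun x y => c x y * |u y - u x| with hσ
  have step1 : Eh c u = ∑ x ∈ Af, ∑ y ∈ univ \ Af, f x y := by
    have e0 : ∀ x, ∑ y ∈ univ \ Af, f x y + ∑ y ∈ Af, f x y = ∑ y, f x y :=
      fun x => Finset.sum_sdiff (Finset.subset_univ Af)
    have e1 : ∑ x ∈ Af, ∑ y ∈ Af, f x y = 0 :=
      antisym_sum_zero Af f (fun x y => by rw [hf]; simp only; rw [hsym x y]; ring)
    have e2 : ∑ x ∈ Af, ∑ y, f x y = ∑ x ∈ S, ∑ y, f x y := by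
      symm
      apply Finset.sum_subset (fun s hs => hSA s hs)
      intro x hxA hxS
      have hxT : x ∉ T := fun hxT => hTA x hxT hxA
      exact hharm x hxS hxT
    have e3 : ∑ x ∈ S, ∑ y, f x y = Eh c u :=
      flow_strength c hsym S T hdisj u huS huT hharm
    calc Eh c u = ∑ x ∈ Af, ∑ y, f x y := by rw [e2, e3]
      _ = ∑ x ∈ Af, (∑ y ∈ univ \ Af, f x y + ∑ y ∈ Af, f x y) :=
          Finset.sum_congr rfl fun x _ => (e0 x).symm
      _ = ∑ x ∈ Af, ∑ y ∈ univ \ Af, f x y := by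
          rw [Finset.sum_add_distrib, e1, add_zero]
  have step2 : ∑ x ∈ Af, ∑ y ∈ univ \ Af, f x y ≤ ∑ x ∈ Af, ∑ y ∈ univ \ Af, σ x y := by
    apply Finset.sum_le_sum; intro x _
    apply Finset.sum_le_sum; intro y _
    rw [hf, hσ]; simp only
    calc c x y * (u y - u x) ≤ |c x y * (u y - u x)| := le_abs_self _
      _ = c x y * |u y - u x| := by rw [abs_mul, abs_of_nonneg (hnn x y)]
  set P : Finset (V × V) := (Af ×ˢ (univ \ Af)).filter (fun p => p ∈ F) with hP
  have step3 : ∑ x ∈ Af, ∑ y ∈ univ \ Af, σ x y = ∑ p ∈ P, σ p.1 p.2 := by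
    rw [← Finset.sum_product']
    symm
    apply Finset.sum_filter_of_ne
    intro p hp hne
    rw [Finset.mem_product] at hp
    have hc : 0 < c p.1 p.2 := by
      rcases (hnn p.1 p.2).lt_or_eq with h | h
      · exact h
      · exfalso; apply hne; rw [hσ]; simp only [← h, zero_mul]
    by_contra hpF
    have := hclosed p.1 p.2 hp.1 hc hpF
    have h2 := hp.2
    rw [Finset.mem_sdiff] at h2
    exact h2.2 this
  set P' : Finset (V × V) := P.image Prod.swap with hP'
  have hσswap : ∀ p : V × V, σ p.2 p.1 = σ p.1 p.2 := by
    intro p; rw [hσ]; simp only; rw [hsym p.2 p.1, abs_sub_comm]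
  have e4 : ∑ p ∈ P', σ p.1 p.2 = ∑ p ∈ P, σ p.1 p.2 := by
    rw [hP', Finset.sum_image (fun p _ q _ h => Prod.swap_injective h)]
    exact Finset.sum_congr rfl fun p _ => hσswap p
  have hPF : P ⊆ F := fun p hp => (Finset.mem_filter.1 hp).2
  have hP'F : P' ⊆ F := by
    intro p hp
    rw [hP', Finset.mem_image] at hp
    obtain ⟨q, hq, rfl⟩ := hp
    exact hFsym q.1 q.2 (hPF hq)
  have hdisjPP' : Disjoint P P' := by
    rw [Finset.disjoint_left]
    intro p hp hp'
    rw [hP', Finset.mem_image] at hp'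
    obtain ⟨q, hq, hqp⟩ := hp'
    have h1 : p.1 ∈ Af := ((Finset.mem_product.1 (Finset.mem_filter.1 hp).1)).1
    have h2 : q.2 ∈ univ \ Af := ((Finset.mem_product.1 (Finset.mem_filter.1 hq).1)).2
    rw [Finset.mem_sdiff] at h2
    apply h2.2
    have : q.2 = p.1 := by rw [← hqp]; rfl
    rw [this]; exact h1
  have step4 : ∑ p ∈ P, σ p.1 p.2 ≤ (1/2) * ∑ p ∈ F, σ p.1 p.2 := by
    have hsum : ∑ p ∈ P ∪ P', σ p.1 p.2 = ∑ p ∈ P, σ p.1 p.2 + ∑ p ∈ P', σ p.1 p.2 :=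
      Finset.sum_union hdisjPP'
    have hle : ∑ p ∈ P ∪ P', σ p.1 p.2 ≤ ∑ p ∈ F, σ p.1 p.2 := by
      apply Finset.sum_le_sum_of_subset_of_nonneg (Finset.union_subset hPF hP'F)
      intro p _ _
      exact mul_nonneg (hnn p.1 p.2) (abs_nonneg _)
    rw [hsum, e4] at hle
    linarith
  calc Eh c u = ∑ x ∈ Af, ∑ y ∈ univ \ Af, f x y := step1
    _ ≤ ∑ x ∈ Af, ∑ y ∈ univ \ Af, σ x y := step2
    _ = ∑ p ∈ P, σ p.1 p.2 := step3
    _ ≤ (1/2) * ∑ p ∈ F, σ p.1 p.2 := step4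
    _ = (1/2) * ∑ p ∈ F, c p.1 p.2 * |u p.2 - u p.1| := rfl

lemma path_upper (c : V → V → ℝ) (hsym : ∀ x y, c x y = c y x) (hnn : ∀ x y, 0 ≤ c x y)
    (hconn : ∀ x y : V, Relation.ReflTransGen (fun u v => 0 < c u v) x y)
    (S T : Finset V) (hS : S.Nonempty) (hT : T.Nonempty)
    (u0 : V → ℝ)
    (hmin : ∀ w : V → ℝ, (∀ s ∈ S, w s = 0) → (∀ t ∈ T, w t = 1) → Eh c u0 ≤ Eh c w)
    (hEpos : 0 < Eh c u0)
    (ρ : V → V → ℝ) (hρsym : ∀ x y, ρ x y = ρ y x) (hρnn : ∀ x y, 0 ≤ ρ x y)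
    (hρ0 : ∀ x y, c x y = 0 → ρ x y = 0) :
    (sInf {l : ℝ | ∃ (m : ℕ) (γ : Fin (m+1) → V), γ 0 ∈ S ∧ γ (Fin.last m) ∈ T ∧
        (∀ i : Fin m, 0 < c (γ i.castSucc) (γ i.succ)) ∧
        l = ∑ i : Fin m, ρ (γ i.castSucc) (γ i.succ)}) ^ 2
      / ((1/2) * ∑ x, ∑ y, c x y * ρ x y ^ 2) ≤ 1 / Eh c u0 := by
  classical
  set A' : ℝ := (1/2) * ∑ x, ∑ y, c x y * ρ x y ^ 2 with hA'
  have hA'nn : 0 ≤ A' := by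
    rw [hA']
    apply mul_nonneg (by norm_num)
    apply Finset.sum_nonneg; intro x _
    apply Finset.sum_nonneg; intro y _
    exact mul_nonneg (hnn x y) (sq_nonneg _)
  set PL : Set ℝ := {l : ℝ | ∃ (m : ℕ) (γ : Fin (m+1) → V), γ 0 ∈ S ∧ γ (Fin.last m) ∈ T ∧
    (∀ i : Fin m, 0 < c (γ i.castSucc) (γ i.succ)) ∧
    l = ∑ i : Fin m, ρ (γ i.castSucc) (γ i.succ)} with hPL
  have hPLbdd : ∀ l ∈ PL, (0:ℝ) ≤ l := by
    rintro l ⟨m, γ, _, _, _, rfl⟩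
    exact Finset.sum_nonneg fun i _ => hρnn _ _
  have hPLne : PL.Nonempty := by
    obtain ⟨s, hs⟩ := hS
    obtain ⟨t, ht⟩ := hT
    obtain ⟨m, γ, h0, hl, hp⟩ := exists_finpath (c := c) (hconn s t)
    exact ⟨_, m, γ, h0 ▸ hs, hl ▸ ht, hp, rfl⟩
  set L : ℝ := sInf PL with hL
  have hLnn : 0 ≤ L := le_csInf hPLne hPLbdd
  rcases hLnn.lt_or_eq with hLpos | hLzero
  swap
  · rw [← hLzero]
    rw [show (0:ℝ)^2 = 0 by norm_num, zero_div]
    exact div_nonneg zero_le_one hEpos.le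
  -- L > 0 case
  set PS : V → Set ℝ := fun x => {l : ℝ | ∃ (m : ℕ) (γ : Fin (m+1) → V), γ 0 ∈ S ∧
    γ (Fin.last m) = x ∧ (∀ i : Fin m, 0 < c (γ i.castSucc) (γ i.succ)) ∧
    l = ∑ i : Fin m, ρ (γ i.castSucc) (γ i.succ)} with hPS
  have hPSbdd : ∀ x, ∀ l ∈ PS x, (0:ℝ) ≤ l := by
    rintro x l ⟨m, γ, _, _, _, rfl⟩
    exact Finset.sum_nonneg fun i _ => hρnn _ _
  have hPSne : ∀ x, (PS x).Nonempty := by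
    intro x
    obtain ⟨s, hs⟩ := hS
    obtain ⟨m, γ, h0, hl, hp⟩ := exists_finpath (c := c) (hconn s x)
    exact ⟨_, m, γ, h0 ▸ hs, hl, hp, rfl⟩
  set d : V → ℝ := fun x => sInf (PS x) with hd
  have hdnn : ∀ x, 0 ≤ d x := fun x => le_csInf (hPSne x) (hPSbdd x)
  have hdS : ∀ s ∈ S, d s = 0 := by
    intro s hs
    refine le_antisymm ?_ (hdnn s)
    apply csInf_le ⟨0, hPSbdd s⟩
    exact ⟨0, fun _ => s, hs, rfl, fun i => i.elim0, by simp⟩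
  have hdT : ∀ t ∈ T, L ≤ d t := by
    intro t ht
    apply le_csInf (hPSne t)
    rintro l ⟨m, γ, h0, hl, hp, rfl⟩
    apply csInf_le ⟨0, hPLbdd⟩
    exact ⟨m, γ, h0, hl ▸ ht, hp, rfl⟩
  have htri : ∀ x y, 0 < c x y → d y ≤ d x + ρ x y := by
    intro x y hc
    have h1 : ∀ l ∈ PS x, d y - ρ x y ≤ l := by
      rintro l ⟨m, γ, h0, hl, hp, rfl⟩
      have hmem : (∑ i : Fin m, ρ (γ i.castSucc) (γ i.succ)) + ρ x y ∈ PS y := by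
        refine ⟨m+1, Fin.snoc γ y, ?_, Fin.snoc_last _ _, ?_, ?_⟩
        · rw [snoc_zero']; exact h0
        · exact snoc_prop (P := fun a b => 0 < c a b) hp (by rw [hl]; exact hc)
        · rw [snoc_sum, hl]
      have := csInf_le ⟨0, hPSbdd y⟩ hmem
      linarith
    have := le_csInf (hPSne x) h1
    linarith
  set v : V → ℝ := fun x => min (d x / L) 1 with hv
  have hvS : ∀ s ∈ S, v s = 0 := by
    intro s hs
    rw [hv]; simp only [hdS s hs, zero_div]
    exact min_eq_left (by norm_num)
  have hvT : ∀ t ∈ T, v t = 1 := by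
    intro t ht
    rw [hv]; simp only
    apply min_eq_right
    rw [le_div_iff₀ hLpos, one_mul]
    exact hdT t ht
  have hLne : L ≠ 0 := ne_of_gt hLpos
  have hEv : Eh c v ≤ A' / L^2 := by
    have h2 : A' / L^2 = (1/2) * ∑ x, ∑ y, c x y * (ρ x y / L)^2 := by
      rw [hA', div_eq_iff (pow_ne_zero 2 hLne), mul_assoc, Finset.sum_mul]
      congr 1
      apply Finset.sum_congr rfl; intro x _
      rw [Finset.sum_mul]
      apply Finset.sum_congr rfl; intro y _
      rw [div_pow]
      field_simp
    rw [h2]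
    unfold Eh
    apply mul_le_mul_of_nonneg_left _ (by norm_num)
    apply Finset.sum_le_sum; intro x _
    apply Finset.sum_le_sum; intro y _
    rcases (hnn x y).lt_or_eq with hc | hc
    · apply mul_le_mul_of_nonneg_left _ (hnn x y)
      have hdy : d y - d x ≤ ρ x y := by have := htri x y hc; linarith
      have hdx : d x - d y ≤ ρ x y := by
        have hc' : 0 < c y x := by rw [← hsym]; exact hc
        have := htri y x hc'
        have hr := hρsym y x
        linarith
      have habs : |d y - d x| ≤ ρ x y := abs_le.2 ⟨by linarith, hdy⟩
      have h1 : |v y - v x| ≤ ρ x y / L := by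
        calc |v y - v x| ≤ |d y / L - d x / L| := lip_min _ _ _
          _ = |d y - d x| / L := by rw [← sub_div, abs_div, abs_of_pos hLpos]
          _ ≤ ρ x y / L := (div_le_div_iff_of_pos_right hLpos).2 habs
      calc (v y - v x)^2 = |v y - v x|^2 := (sq_abs _).symm
        _ ≤ (ρ x y / L)^2 := pow_le_pow_left₀ (abs_nonneg _) h1 2
    · rw [← hc, zero_mul, zero_mul]
  have hfin : L^2 * Eh c u0 ≤ A' := by
    have h1 := hmin v hvS hvT
    have h2 : Eh c u0 ≤ A' / L^2 := le_trans h1 hEv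
    rw [le_div_iff₀ (by positivity)] at h2
    linarith
  have hA'pos : 0 < A' := lt_of_lt_of_le (mul_pos (pow_pos hLpos 2) hEpos) hfin
  rw [div_le_div_iff₀ hA'pos hEpos]
  linarith

lemma cut_upper (c : V → V → ℝ) (hsym : ∀ x y, c x y = c y x) (hnn : ∀ x y, 0 ≤ c x y)
    (S T : Finset V) (hS : S.Nonempty) (hT : T.Nonempty) (hdisj : Disjoint S T)
    (u0 : V → ℝ) (hu01 : ∀ x, u0 x ∈ Set.Icc (0:ℝ) 1)
    (huS : ∀ s ∈ S, u0 s = 0) (huT : ∀ t ∈ T, u0 t = 1)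
    (hEpos : 0 < Eh c u0)
    (σ : V → V → ℝ) (hσsym : ∀ x y, σ x y = σ y x) (hσnn : ∀ x y, 0 ≤ σ x y)
    (hσ0 : ∀ x y, c x y = 0 → σ x y = 0) (hσne : σ ≠ 0) :
    (sInf {l : ℝ | ∃ F : Finset (V × V),
        (∀ x y : V, (x, y) ∈ F → (y, x) ∈ F) ∧
        (∀ x y : V, (x, y) ∈ F → 0 < c x y) ∧
        (∀ (m : ℕ) (γ : Fin (m+1) → V), γ 0 ∈ S → γ (Fin.last m) ∈ T →
          (∀ i : Fin m, 0 < c (γ i.castSucc) (γ i.succ)) →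
          ∃ i : Fin m, (γ i.castSucc, γ i.succ) ∈ F) ∧
        l = (1/2) * ∑ p ∈ F, σ p.1 p.2}) ^ 2
      / ((1/2) * ∑ x, ∑ y, (1 / c x y) * σ x y ^ 2) ≤ Eh c u0 := by
  classical
  set B : ℝ := (1/2) * ∑ x, ∑ y, (1 / c x y) * σ x y ^ 2 with hB
  have hBpos : 0 < B := by
    have : ∃ x y, σ x y ≠ 0 := by
      by_contra h
      push_neg at h
      exact hσne (funext fun x => funext fun y => h x y)
    obtain ⟨x0, y0, hxy⟩ := this
    have hcne : c x0 y0 ≠ 0 := fun h => hxy (hσ0 x0 y0 h)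
    have hcpos : 0 < c x0 y0 := (hnn x0 y0).lt_of_ne (Ne.symm hcne)
    have hterm : 0 < (1 / c x0 y0) * σ x0 y0 ^ 2 :=
      mul_pos (by positivity) (by positivity)
    have hnn1c : ∀ x y, 0 ≤ (1 / c x y) * σ x y ^ 2 := by
      intro x y
      rcases (hnn x y).lt_or_eq with h | h
      · positivity
      · rw [← h]; simp
    rw [hB]
    apply mul_pos (by norm_num)
    exact Finset.sum_pos' (fun x _ => Finset.sum_nonneg fun y _ => hnn1c x y)
      ⟨x0, mem_univ x0, Finset.sum_pos' (fun y _ => hnn1c x0 y) ⟨y0, mem_univ y0, hterm⟩⟩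
  set CV : Set ℝ := {l : ℝ | ∃ F : Finset (V × V),
      (∀ x y : V, (x, y) ∈ F → (y, x) ∈ F) ∧
      (∀ x y : V, (x, y) ∈ F → 0 < c x y) ∧
      (∀ (m : ℕ) (γ : Fin (m+1) → V), γ 0 ∈ S → γ (Fin.last m) ∈ T →
        (∀ i : Fin m, 0 < c (γ i.castSucc) (γ i.succ)) →
        ∃ i : Fin m, (γ i.castSucc, γ i.succ) ∈ F) ∧
      l = (1/2) * ∑ p ∈ F, σ p.1 p.2} with hCV
  have hCVbdd : ∀ l ∈ CV, (0:ℝ) ≤ l := by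
    rintro l ⟨F, _, _, _, rfl⟩
    exact mul_nonneg (by norm_num) (Finset.sum_nonneg fun p _ => hσnn p.1 p.2)
  set M : ℝ := sInf CV with hM
  have hM0 : 0 ≤ M := by
    apply le_csInf
    · refine ⟨_, univ.filter (fun p : V × V => 0 < c p.1 p.2), ?_, ?_, ?_, rfl⟩
      · intro x y hxy
        rw [Finset.mem_filter] at hxy ⊢
        refine ⟨mem_univ _, ?_⟩
        have := hxy.2
        simp only at this ⊢
        rw [hsym y x]
        exact this
      · intro x y hxy
        exact (Finset.mem_filter.1 hxy).2
      · intro m γ h0 hl hp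
        have hm : 0 < m := by
          by_contra h
          push_neg at h
          interval_cases m
          exact Finset.disjoint_left.1 hdisj h0 hl
        refine ⟨⟨0, hm⟩, ?_⟩
        rw [Finset.mem_filter]
        exact ⟨mem_univ _, hp _⟩
    · exact hCVbdd
  -- value grid
  set vs : Finset ℝ := Finset.image u0 univ with hvs
  have hvs0 : (0:ℝ) ∈ vs := by
    obtain ⟨s, hs⟩ := hS
    rw [hvs, Finset.mem_image]
    exact ⟨s, mem_univ s, huS s hs⟩
  have hvs1 : (1:ℝ) ∈ vs := by
    obtain ⟨t, ht⟩ := hT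
    rw [hvs, Finset.mem_image]
    exact ⟨t, mem_univ t, huT t ht⟩
  obtain ⟨K, hK⟩ : ∃ K, vs.card = K + 1 := by
    have : 0 < vs.card := Finset.card_pos.2 ⟨0, hvs0⟩
    exact ⟨vs.card - 1, by omega⟩
  set t : Fin (K+1) → ℝ := fun j => ((vs.orderIsoOfFin hK) j : ℝ) with ht
  have hmono : StrictMono t := fun i j h => (vs.orderIsoOfFin hK).strictMono h
  have htmem : ∀ j, t j ∈ vs := fun j => ((vs.orderIsoOfFin hK) j).2
  have hsurj : ∀ b ∈ vs, ∃ j, t j = b := by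
    intro b hb
    exact ⟨(vs.orderIsoOfFin hK).symm ⟨b, hb⟩, by rw [ht]; simp⟩
  have hvge : ∀ r ∈ vs, (0:ℝ) ≤ r ∧ r ≤ 1 := by
    intro r hr
    rw [hvs, Finset.mem_image] at hr
    obtain ⟨x, _, rfl⟩ := hr
    exact ⟨(hu01 x).1, (hu01 x).2⟩
  have ht0 : t 0 = 0 := by
    obtain ⟨j0, hj0⟩ := hsurj 0 hvs0
    refine le_antisymm (hj0 ▸ hmono.monotone (Fin.zero_le j0)) (hvge _ (htmem 0)).1
  have htlast : t (Fin.last K) = 1 := by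
    obtain ⟨j1, hj1⟩ := hsurj 1 hvs1
    exact le_antisymm (hvge _ (htmem _)).2 (hj1 ▸ hmono.monotone (Fin.le_last j1))
  set Ft : ℝ → Finset (V × V) := fun s => univ.filter
    (fun p : V × V => 0 < c p.1 p.2 ∧ min (u0 p.1) (u0 p.2) ≤ s ∧ s < max (u0 p.1) (u0 p.2))
    with hFt
  have hMle : ∀ j : Fin K, M ≤ (1/2) * ∑ p ∈ Ft (t j.castSucc), σ p.1 p.2 := by
    intro j
    apply csInf_le ⟨0, hCVbdd⟩
    refine ⟨Ft (t j.castSucc), ?_, ?_, ?_, rfl⟩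
    · intro x y hxy
      rw [hFt, Finset.mem_filter] at hxy ⊢
      refine ⟨mem_univ _, ?_⟩
      have h2 := hxy.2
      simp only at h2 ⊢
      rw [hsym y x, min_comm (u0 y) (u0 x), max_comm (u0 y) (u0 x)]
      exact h2
    · intro x y hxy
      exact ((Finset.mem_filter.1 hxy).2).1
    · intro m γ h0 hl hp
      have hQ0 : u0 (γ 0) ≤ t j.castSucc := by
        rw [huS _ h0, ← ht0]
        exact hmono.monotone (Fin.zero_le _)
      have hQl : ¬ u0 (γ (Fin.last m)) ≤ t j.castSucc := by
        rw [huT _ hl, not_le, ← htlast]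
        exact hmono (Fin.castSucc_lt_last j)
      obtain ⟨i, hi1, hi2⟩ := exists_crossing (fun i => u0 (γ i) ≤ t j.castSucc) hQ0 hQl
      refine ⟨i, ?_⟩
      rw [hFt, Finset.mem_filter]
      push_neg at hi2
      refine ⟨mem_univ _, hp i, le_trans (min_le_left _ _) hi1, lt_of_lt_of_le hi2 (le_max_right _ _)⟩
  -- coarea
  set W : ℝ := (1/2) * ∑ x, ∑ y, σ x y * |u0 y - u0 x| with hW
  have hMW : M ≤ W := by
    have h1 : M = M * (t (Fin.last K) - t 0) := by rw [ht0, htlast]; ring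
    have h2 : t (Fin.last K) - t 0 = ∑ j : Fin K, (t j.succ - t j.castSucc) := by
      exact (telescope' t (fun r => r)).symm
    have h3 : M * (∑ j : Fin K, (t j.succ - t j.castSucc))
        ≤ ∑ j : Fin K, (t j.succ - t j.castSucc) * ((1/2) * ∑ p ∈ Ft (t j.castSucc), σ p.1 p.2) := by
      rw [Finset.mul_sum]
      apply Finset.sum_le_sum
      intro j _
      have hd : 0 ≤ t j.succ - t j.castSucc :=
        sub_nonneg.2 (hmono.monotone (Fin.castSucc_le_succ j))
      rw [mul_comm]
      exact mul_le_mul_of_nonneg_left (hMle j) hd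
    have h4 : ∑ j : Fin K, (t j.succ - t j.castSucc) * ((1/2) * ∑ p ∈ Ft (t j.castSucc), σ p.1 p.2)
        = W := by
      have hcv : ∀ s : ℝ, (∑ p ∈ Ft s, σ p.1 p.2)
          = ∑ x, ∑ y, (if 0 < c x y ∧ min (u0 x) (u0 y) ≤ s ∧ s < max (u0 x) (u0 y)
              then σ x y else 0) := by
        intro s
        rw [hFt, Finset.sum_filter, Fintype.sum_prod_type]
      have e1 : ∀ j : Fin K, (t j.succ - t j.castSucc) * ((1/2) * ∑ p ∈ Ft (t j.castSucc), σ p.1 p.2)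
          = (1/2) * ∑ x, ∑ y, ((t j.succ - t j.castSucc) *
              (if 0 < c x y ∧ min (u0 x) (u0 y) ≤ t j.castSucc ∧
                t j.castSucc < max (u0 x) (u0 y) then σ x y else 0)) := by
        intro j
        rw [hcv, mul_left_comm]
        congr 1
        simp only [Finset.mul_sum]
      rw [Finset.sum_congr rfl fun j _ => e1 j, ← Finset.mul_sum, Finset.sum_comm]
      rw [hW]
      congr 1
      apply Finset.sum_congr rfl; intro x _
      rw [Finset.sum_comm]
      apply Finset.sum_congr rfl; intro y _
      by_cases hc : 0 < c x y
      · have e2 : ∀ j : Fin K, (t j.succ - t j.castSucc) *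
            (if 0 < c x y ∧ min (u0 x) (u0 y) ≤ t j.castSucc ∧
              t j.castSucc < max (u0 x) (u0 y) then σ x y else 0)
            = σ x y * (if min (u0 x) (u0 y) ≤ t j.castSucc ∧
                t j.castSucc < max (u0 x) (u0 y) then t j.succ - t j.castSucc else 0) := by
          intro j
          by_cases h : min (u0 x) (u0 y) ≤ t j.castSucc ∧ t j.castSucc < max (u0 x) (u0 y)
          · rw [if_pos ⟨hc, h⟩, if_pos h]; ring
          · rw [if_neg (fun hh => h ⟨hh.2.1, hh.2.2⟩), if_neg h, mul_zero, mul_zero]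
        rw [Finset.sum_congr rfl fun j _ => e2 j, ← Finset.mul_sum]
        have hmemx : u0 x ∈ vs := by rw [hvs, Finset.mem_image]; exact ⟨x, mem_univ x, rfl⟩
        have hmemy : u0 y ∈ vs := by rw [hvs, Finset.mem_image]; exact ⟨y, mem_univ y, rfl⟩
        have hmin : min (u0 x) (u0 y) ∈ vs := by
          rcases min_choice (u0 x) (u0 y) with h | h <;> rw [h] <;> assumption
        have hmax : max (u0 x) (u0 y) ∈ vs := by
          rcases max_choice (u0 x) (u0 y) with h | h <;> rw [h] <;> assumption
        rw [grid_sum t hmono (hsurj _ hmin) (hsurj _ hmax) (min_le_max)]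
        congr 1
        rw [← abs_sub_comm (u0 x) (u0 y)]
        exact max_sub_min_eq_abs' (u0 x) (u0 y) ▸ (by rw [max_sub_min_eq_abs])
      · have hc0 : c x y = 0 := le_antisymm (not_lt.1 hc) (hnn x y)
        have hσxy : σ x y = 0 := hσ0 x y hc0
        simp [hc, hσxy]
    calc M = M * (t (Fin.last K) - t 0) := h1
      _ = M * ∑ j : Fin K, (t j.succ - t j.castSucc) := by rw [h2]
      _ ≤ _ := h3
      _ = W := h4
  have hCS : W^2 ≤ B * Eh c u0 := by
    set f : V × V → ℝ := fun p => Real.sqrt (1 / c p.1 p.2) * σ p.1 p.2 with hf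
    set g : V × V → ℝ := fun p => Real.sqrt (c p.1 p.2) * |u0 p.2 - u0 p.1| with hg
    have hfg : ∑ p : V × V, f p * g p = ∑ x, ∑ y, σ x y * |u0 y - u0 x| := by
      rw [Fintype.sum_prod_type]
      apply Finset.sum_congr rfl; intro x _
      apply Finset.sum_congr rfl; intro y _
      rw [hf, hg]
      simp only
      by_cases hc : 0 < c x y
      · have h1 : Real.sqrt (1 / c x y) * Real.sqrt (c x y) = 1 := by
          rw [← Real.sqrt_mul (by positivity), one_div_mul_cancel (ne_of_gt hc), Real.sqrt_one]
        calc Real.sqrt (1 / c x y) * σ x y * (Real.sqrt (c x y) * |u0 y - u0 x|)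
            = (Real.sqrt (1 / c x y) * Real.sqrt (c x y)) * (σ x y * |u0 y - u0 x|) := by ring
          _ = σ x y * |u0 y - u0 x| := by rw [h1, one_mul]
      · have hc0 : c x y = 0 := le_antisymm (not_lt.1 hc) (hnn x y)
        rw [hσ0 x y hc0]
        ring
    have hf2 : ∑ p : V × V, (f p)^2 = ∑ x, ∑ y, (1 / c x y) * σ x y ^ 2 := by
      rw [Fintype.sum_prod_type]
      apply Finset.sum_congr rfl; intro x _
      apply Finset.sum_congr rfl; intro y _
      rw [hf]
      simp only
      have h1c : 0 ≤ 1 / c x y := by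
        rcases (hnn x y).lt_or_eq with h | h
        · positivity
        · rw [← h]; norm_num
      rw [mul_pow, Real.sq_sqrt h1c]
    have hg2 : ∑ p : V × V, (g p)^2 = ∑ x, ∑ y, c x y * (u0 y - u0 x) ^ 2 := by
      rw [Fintype.sum_prod_type]
      apply Finset.sum_congr rfl; intro x _
      apply Finset.sum_congr rfl; intro y _
      rw [hg]
      simp only
      rw [mul_pow, Real.sq_sqrt (hnn x y), sq_abs]
    have hcs := Finset.sum_mul_sq_le_sq_mul_sq univ f g
    rw [hfg, hf2, hg2] at hcs
    have hWd : W = (1/2) * ∑ x, ∑ y, σ x y * |u0 y - u0 x| := hW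
    have hBd : B = (1/2) * ∑ x, ∑ y, (1 / c x y) * σ x y ^ 2 := hB
    have hEd : Eh c u0 = (1/2) * ∑ x, ∑ y, c x y * (u0 y - u0 x) ^ 2 := rfl
    nlinarith [hcs]
  have hMsq : M^2 ≤ B * Eh c u0 := le_trans (by nlinarith) hCS
  rw [div_le_iff₀ hBpos]
  calc M^2 ≤ B * Eh c u0 := hMsq
    _ = Eh c u0 * B := mul_comm _ _

end Main
end Helpers
section Main2
variable {V : Type*} [Fintype V] [DecidableEq V]

lemma exists_active_edge (c : V → V → ℝ)
    (hconn : ∀ x y : V, Relation.ReflTransGen (fun u v => 0 < c u v) x y)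
    (S T : Finset V) (hS : S.Nonempty) (hT : T.Nonempty)
    (u0 : V → ℝ) (huS : ∀ s ∈ S, u0 s = 0) (huT : ∀ t ∈ T, u0 t = 1) :
    ∃ x y, 0 < c x y ∧ u0 y - u0 x ≠ 0 := by
  obtain ⟨s, hs⟩ := hS
  obtain ⟨t, ht⟩ := hT
  obtain ⟨m, γ, h0, hl, hp⟩ := exists_finpath (c := c) (hconn s t)
  have htel : ∑ i : Fin m, (u0 (γ i.succ) - u0 (γ i.castSucc)) = 1 := by
    rw [telescope' γ u0, hl, h0, huT t ht, huS s hs]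
    ring
  have : ∃ i ∈ (Finset.univ : Finset (Fin m)), (u0 (γ i.succ) - u0 (γ i.castSucc)) ≠ 0 := by
    apply Finset.exists_ne_zero_of_sum_ne_zero
    rw [htel]; norm_num
  obtain ⟨i, _, hi⟩ := this
  exact ⟨γ i.castSucc, γ i.succ, hp i, hi⟩

lemma Eh_pos (c : V → V → ℝ) (hnn : ∀ x y, 0 ≤ c x y) (u0 : V → ℝ)
    {x0 y0 : V} (hc : 0 < c x0 y0) (hdu : u0 y0 - u0 x0 ≠ 0) :
    0 < Eh c u0 := by
  have hterm : 0 < c x0 y0 * (u0 y0 - u0 x0)^2 := by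
    apply mul_pos hc
    have := pow_pos (abs_pos.2 hdu) 2
    rwa [sq_abs] at this
  unfold Eh
  apply mul_pos (by norm_num)
  exact Finset.sum_pos'
    (fun x _ => Finset.sum_nonneg fun y _ => mul_nonneg (hnn x y) (sq_nonneg _))
    ⟨x0, Finset.mem_univ x0, Finset.sum_pos'
      (fun y _ => mul_nonneg (hnn x0 y) (sq_nonneg _)) ⟨y0, Finset.mem_univ y0, hterm⟩⟩

end Main2

theorem stmt_9 {V : Type*} [Fintype V] [DecidableEq V]
    (c : V → V → ℝ) (hsym : ∀ x y, c x y = c y x) (hnn : ∀ x y, 0 ≤ c x y)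
    (hconn : ∀ x y : V, Relation.ReflTransGen (fun u v => 0 < c u v) x y)
    (S T : Finset V) (hS : S.Nonempty) (hT : T.Nonempty) (hdisj : Disjoint S T) :
    sSup {q : ℝ | ∃ ρ : V → V → ℝ, (∀ x y, ρ x y = ρ y x) ∧ (∀ x y, 0 ≤ ρ x y) ∧
        (∀ x y, c x y = 0 → ρ x y = 0) ∧ ρ ≠ 0 ∧
        q = (sInf {l : ℝ | ∃ (m : ℕ) (γ : Fin (m+1) → V), γ 0 ∈ S ∧ γ (Fin.last m) ∈ T ∧
              (∀ i : Fin m, 0 < c (γ i.castSucc) (γ i.succ)) ∧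
              l = ∑ i : Fin m, ρ (γ i.castSucc) (γ i.succ)}) ^ 2
            / ((1/2) * ∑ x, ∑ y, c x y * ρ x y ^ 2)} *
    sSup {q : ℝ | ∃ ρ : V → V → ℝ, (∀ x y, ρ x y = ρ y x) ∧ (∀ x y, 0 ≤ ρ x y) ∧
        (∀ x y, c x y = 0 → ρ x y = 0) ∧ ρ ≠ 0 ∧
        q = (sInf {l : ℝ | ∃ F : Finset (V × V),
              (∀ x y : V, (x, y) ∈ F → (y, x) ∈ F) ∧
              (∀ x y : V, (x, y) ∈ F → 0 < c x y) ∧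
              (∀ (m : ℕ) (γ : Fin (m+1) → V), γ 0 ∈ S → γ (Fin.last m) ∈ T →
                (∀ i : Fin m, 0 < c (γ i.castSucc) (γ i.succ)) →
                ∃ i : Fin m, (γ i.castSucc, γ i.succ) ∈ F) ∧
              l = (1/2) * ∑ p ∈ F, ρ p.1 p.2}) ^ 2
            / ((1/2) * ∑ x, ∑ y, (1 / c x y) * ρ x y ^ 2)}
      = 1 := by
  classical
  -- the Dirichlet minimizer
  obtain ⟨u0, hu01, huS, huT, hmin⟩ := exists_min c hnn S T hdisj
  obtain ⟨x0, y0, hc0, hdu0⟩ := exists_active_edge c hconn S T hS hT u0 huS huT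
  have hEpos : 0 < Eh c u0 := Eh_pos c hnn u0 hc0 hdu0
  have hharm : ∀ x, x ∉ S → x ∉ T → ∑ y, c x y * (u0 y - u0 x) = 0 :=
    fun x hxS hxT => harmonic_min c hsym hnn S T u0 huS huT hmin x hxS hxT
  set E0 : ℝ := Eh c u0 with hE0
  -- ===== path side =====
  set P : Set ℝ := {q : ℝ | ∃ ρ : V → V → ℝ, (∀ x y, ρ x y = ρ y x) ∧ (∀ x y, 0 ≤ ρ x y) ∧
      (∀ x y, c x y = 0 → ρ x y = 0) ∧ ρ ≠ 0 ∧
      q = (sInf {l : ℝ | ∃ (m : ℕ) (γ : Fin (m+1) → V), γ 0 ∈ S ∧ γ (Fin.last m) ∈ T ∧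
            (∀ i : Fin m, 0 < c (γ i.castSucc) (γ i.succ)) ∧
            l = ∑ i : Fin m, ρ (γ i.castSucc) (γ i.succ)}) ^ 2
          / ((1/2) * ∑ x, ∑ y, c x y * ρ x y ^ 2)} with hP
  have hPub : ∀ q ∈ P, q ≤ 1 / E0 := by
    rintro q ⟨ρ, h1, h2, h3, _, rfl⟩
    exact path_upper c hsym hnn hconn S T hS hT u0 hmin hEpos ρ h1 h2 h3
  -- path witness
  set ρs : V → V → ℝ := fun x y => if 0 < c x y then |u0 y - u0 x| else 0 with hρs
  have hρs_sym : ∀ x y, ρs x y = ρs y x := by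
    intro x y
    rw [hρs]; simp only
    rw [hsym x y, abs_sub_comm]
  have hρs_nn : ∀ x y, 0 ≤ ρs x y := by
    intro x y; rw [hρs]; simp only
    split_ifs
    · exact abs_nonneg _
    · exact le_refl 0
  have hρs_0 : ∀ x y, c x y = 0 → ρs x y = 0 := by
    intro x y h; rw [hρs]; simp only
    rw [if_neg (by rw [h]; exact lt_irrefl 0)]
  have hρs_ne : ρs ≠ 0 := by
    intro h
    have h2 : ρs x0 y0 = 0 := by rw [h]; rfl
    rw [hρs] at h2; simp only [if_pos hc0] at h2
    exact hdu0 (abs_eq_zero.1 h2)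
  have hρs_energy : (1/2) * ∑ x, ∑ y, c x y * ρs x y ^ 2 = E0 := by
    rw [hE0]; unfold Eh
    congr 1
    apply Finset.sum_congr rfl; intro x _
    apply Finset.sum_congr rfl; intro y _
    rw [hρs]; simp only
    split_ifs with h
    · rw [sq_abs]
    · have hc : c x y = 0 := le_antisymm (not_lt.1 h) (hnn x y)
      rw [hc]; ring
  have hLs_ge : 1 ≤ sInf {l : ℝ | ∃ (m : ℕ) (γ : Fin (m+1) → V), γ 0 ∈ S ∧
      γ (Fin.last m) ∈ T ∧ (∀ i : Fin m, 0 < c (γ i.castSucc) (γ i.succ)) ∧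
      l = ∑ i : Fin m, ρs (γ i.castSucc) (γ i.succ)} := by
    apply le_csInf
    · obtain ⟨s, hs⟩ := hS
      obtain ⟨t, ht⟩ := hT
      obtain ⟨m, γ, h0, hl, hp⟩ := exists_finpath (c := c) (hconn s t)
      exact ⟨_, m, γ, h0 ▸ hs, hl ▸ ht, hp, rfl⟩
    · rintro l ⟨m, γ, h0, hl, hp, rfl⟩
      calc (1:ℝ) = u0 (γ (Fin.last m)) - u0 (γ 0) := by
            rw [huT _ hl, huS _ h0]; ring
        _ = ∑ i : Fin m, (u0 (γ i.succ) - u0 (γ i.castSucc)) := (telescope' γ u0).symm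
        _ ≤ ∑ i : Fin m, ρs (γ i.castSucc) (γ i.succ) := by
            apply Finset.sum_le_sum
            intro i _
            rw [hρs]; simp only [if_pos (hp i)]
            exact le_abs_self _
  have hPwit : (sInf {l : ℝ | ∃ (m : ℕ) (γ : Fin (m+1) → V), γ 0 ∈ S ∧
      γ (Fin.last m) ∈ T ∧ (∀ i : Fin m, 0 < c (γ i.castSucc) (γ i.succ)) ∧
      l = ∑ i : Fin m, ρs (γ i.castSucc) (γ i.succ)}) ^ 2
        / ((1/2) * ∑ x, ∑ y, c x y * ρs x y ^ 2) ∈ P :=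
    ⟨ρs, hρs_sym, hρs_nn, hρs_0, hρs_ne, rfl⟩
  have hPwit_ge : 1 / E0 ≤ (sInf {l : ℝ | ∃ (m : ℕ) (γ : Fin (m+1) → V), γ 0 ∈ S ∧
      γ (Fin.last m) ∈ T ∧ (∀ i : Fin m, 0 < c (γ i.castSucc) (γ i.succ)) ∧
      l = ∑ i : Fin m, ρs (γ i.castSucc) (γ i.succ)}) ^ 2
        / ((1/2) * ∑ x, ∑ y, c x y * ρs x y ^ 2) := by
    rw [hρs_energy]
    apply (div_le_div_iff_of_pos_right hEpos).2
    nlinarith [hLs_ge]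
  have hsupP : sSup P = 1 / E0 := by
    apply le_antisymm
    · exact csSup_le ⟨_, hPwit⟩ hPub
    · exact le_trans hPwit_ge (le_csSup ⟨1 / E0, hPub⟩ hPwit)
  -- ===== cut side =====
  set Q : Set ℝ := {q : ℝ | ∃ ρ : V → V → ℝ, (∀ x y, ρ x y = ρ y x) ∧ (∀ x y, 0 ≤ ρ x y) ∧
      (∀ x y, c x y = 0 → ρ x y = 0) ∧ ρ ≠ 0 ∧
      q = (sInf {l : ℝ | ∃ F : Finset (V × V),
            (∀ x y : V, (x, y) ∈ F → (y, x) ∈ F) ∧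
            (∀ x y : V, (x, y) ∈ F → 0 < c x y) ∧
            (∀ (m : ℕ) (γ : Fin (m+1) → V), γ 0 ∈ S → γ (Fin.last m) ∈ T →
              (∀ i : Fin m, 0 < c (γ i.castSucc) (γ i.succ)) →
              ∃ i : Fin m, (γ i.castSucc, γ i.succ) ∈ F) ∧
            l = (1/2) * ∑ p ∈ F, ρ p.1 p.2}) ^ 2
          / ((1/2) * ∑ x, ∑ y, (1 / c x y) * ρ x y ^ 2)} with hQ
  have hQub : ∀ q ∈ Q, q ≤ E0 := by
    rintro q ⟨σ, h1, h2, h3, h4, rfl⟩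
    exact cut_upper c hsym hnn S T hS hT hdisj u0 hu01 huS huT hEpos σ h1 h2 h3 h4
  -- cut witness
  set σs : V → V → ℝ := fun x y => c x y * |u0 y - u0 x| with hσs
  have hσs_sym : ∀ x y, σs x y = σs y x := by
    intro x y; rw [hσs]; simp only
    rw [hsym x y, abs_sub_comm]
  have hσs_nn : ∀ x y, 0 ≤ σs x y := fun x y => mul_nonneg (hnn x y) (abs_nonneg _)
  have hσs_0 : ∀ x y, c x y = 0 → σs x y = 0 := by
    intro x y h; rw [hσs]; simp only [h, zero_mul]
  have hσs_ne : σs ≠ 0 := by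
    intro h
    have h2 : σs x0 y0 = 0 := by rw [h]; rfl
    rw [hσs] at h2; simp only at h2
    rcases mul_eq_zero.1 h2 with h3 | h3
    · exact (ne_of_gt hc0) h3
    · exact hdu0 (abs_eq_zero.1 h3)
  have hσs_energy : (1/2) * ∑ x, ∑ y, (1 / c x y) * σs x y ^ 2 = E0 := by
    rw [hE0]; unfold Eh
    congr 1
    apply Finset.sum_congr rfl; intro x _
    apply Finset.sum_congr rfl; intro y _
    rw [hσs]; simp only
    rcases (hnn x y).lt_or_eq with h | h
    · rw [mul_pow, ← sq_abs (u0 y - u0 x)]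
      field_simp
    · rw [← h]; ring
  set CVs : Set ℝ := {l : ℝ | ∃ F : Finset (V × V),
      (∀ x y : V, (x, y) ∈ F → (y, x) ∈ F) ∧
      (∀ x y : V, (x, y) ∈ F → 0 < c x y) ∧
      (∀ (m : ℕ) (γ : Fin (m+1) → V), γ 0 ∈ S → γ (Fin.last m) ∈ T →
        (∀ i : Fin m, 0 < c (γ i.castSucc) (γ i.succ)) →
        ∃ i : Fin m, (γ i.castSucc, γ i.succ) ∈ F) ∧
      l = (1/2) * ∑ p ∈ F, σs p.1 p.2} with hCVs
  have hCVs_ne : CVs.Nonempty := by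
    refine ⟨_, univ.filter (fun p : V × V => 0 < c p.1 p.2), ?_, ?_, ?_, rfl⟩
    · intro x y hxy
      rw [Finset.mem_filter] at hxy ⊢
      refine ⟨mem_univ _, ?_⟩
      have := hxy.2
      simp only at this ⊢
      rw [hsym y x]
      exact this
    · intro x y hxy
      exact (Finset.mem_filter.1 hxy).2
    · intro m γ h0 hl hp
      have hm : 0 < m := by
        by_contra h
        push_neg at h
        interval_cases m
        exact Finset.disjoint_left.1 hdisj h0 hl
      refine ⟨⟨0, hm⟩, ?_⟩
      rw [Finset.mem_filter]
      exact ⟨mem_univ _, hp _⟩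
  have hMge : E0 ≤ sInf CVs := by
    apply le_csInf hCVs_ne
    rintro l ⟨F, hFs, hFp, hFc, rfl⟩
    exact cut_lower c hsym hnn S T hdisj u0 huS huT hharm F hFs hFc
  have hQwit : (sInf CVs) ^ 2 / ((1/2) * ∑ x, ∑ y, (1 / c x y) * σs x y ^ 2) ∈ Q :=
    ⟨σs, hσs_sym, hσs_nn, hσs_0, hσs_ne, rfl⟩
  have hQwit_ge : E0 ≤ (sInf CVs) ^ 2 / ((1/2) * ∑ x, ∑ y, (1 / c x y) * σs x y ^ 2) := by
    rw [hσs_energy, le_div_iff₀ hEpos]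
    nlinarith [hMge, hEpos]
  have hsupQ : sSup Q = E0 := by
    apply le_antisymm
    · exact csSup_le ⟨_, hQwit⟩ hQub
    · exact le_trans hQwit_ge (le_csSup ⟨E0, hQub⟩ hQwit)
  rw [hsupP, hsupQ]
  exact one_div_mul_cancel (ne_of_gt hEpos)
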